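/- Over ℂ, the system A_i X_{i'}^{ε_i} - X_{i''}^{δ_i} B_i = C_i (i = 1,…,s) with ε_i, δ_i ∈ {id, conjugation, transpose, conjugate-transpose} has a solution if and only if there exist invertible complex matrices P_1,…,P_t with [[A_i,0],[0,B_i]] · P_{i'}^{⟪ε_i⟫} = P_{i''}^{⟪δ_i⟫} · [[A_i,C_i],[0,B_i]] for all i, where P^{⟪σ⟫} = P^σ if σ ∈ {id, conj} and P^{⟪σ⟫} = J (P^σ)⁻¹ J⁻¹ if σ ∈ {⊤, *}, with J = [[0,I],[-I,0]]. -/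

import Mathlib

open Matrix

/-- The four operations `id`, `conj`, `⊤`, `*` on square complex matrices, encoded by a
pair of Booleans: the first component applies entrywise conjugation, the second transposes. -/
def fourOp {k : Type*} (σ : Bool × Bool) (M : Matrix k k ℂ) : Matrix k k ℂ :=
  if σ.2 then (if σ.1 then M.map (starRingEnd ℂ) else M)ᵀ
  else (if σ.1 then M.map (starRingEnd ℂ) else M)

/-- The block matrix `J = [[0,I],[-I,0]]`. -/
def JmatC (k : ℕ) : Matrix (Fin k ⊕ Fin k) (Fin k ⊕ Fin k) ℂ :=
  fromBlocks 0 1 (-1) 0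

/-- `P^{⟪σ⟫} = P^σ` for `σ ∈ {id, conj}` and `P^{⟪σ⟫} = J (P^σ)⁻¹ J⁻¹` for `σ ∈ {⊤, *}`. -/
noncomputable def angFour {k : ℕ} (σ : Bool × Bool)
    (P : Matrix (Fin k ⊕ Fin k) (Fin k ⊕ Fin k) ℂ) :
    Matrix (Fin k ⊕ Fin k) (Fin k ⊕ Fin k) ℂ :=
  if σ.2 then JmatC k * (fourOp σ P)⁻¹ * (JmatC k)⁻¹ else fourOp σ P

namespace RothAux

noncomputable section

def cjc {a b : Type*} (M : Matrix a b ℂ) : Matrix a b ℂ := M.map (starRingEnd ℂ)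
def cjb (t : Bool) {a b : Type*} (M : Matrix a b ℂ) : Matrix a b ℂ := if t then cjc M else M

@[simp] lemma cjb_false {a b : Type*} (M : Matrix a b ℂ) : cjb false M = M := rfl
@[simp] lemma cjb_true {a b : Type*} (M : Matrix a b ℂ) : cjb true M = cjc M := rfl

@[simp] lemma cjc_cjc {a b : Type*} (M : Matrix a b ℂ) : cjc (cjc M) = M := by
  ext i j; simp [cjc]

lemma cjc_mul {a b c : Type*} [Fintype b] (M : Matrix a b ℂ) (N : Matrix b c ℂ) :
    cjc (M * N) = cjc M * cjc N := by simp [cjc, Matrix.map_mul]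

@[simp] lemma cjc_one {a : Type*} [Fintype a] [DecidableEq a] :
    cjc (1 : Matrix a a ℂ) = 1 := by simp [cjc]

@[simp] lemma cjc_zero {a b : Type*} : cjc (0 : Matrix a b ℂ) = 0 := by ext i j; simp [cjc]

lemma cjc_sub {a b : Type*} (M N : Matrix a b ℂ) : cjc (M - N) = cjc M - cjc N := by
  ext i j; simp [cjc]

lemma cjc_neg {a b : Type*} (M : Matrix a b ℂ) : cjc (-M) = -(cjc M) := by ext i j; simp [cjc]

lemma cjc_transpose {a b : Type*} (M : Matrix a b ℂ) : cjc (Mᵀ) = (cjc M)ᵀ := by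
  ext i j; simp [cjc]

lemma cjc_fromBlocks {a b c d : Type*} (A : Matrix a c ℂ) (B : Matrix a d ℂ)
    (C : Matrix b c ℂ) (D : Matrix b d ℂ) :
    cjc (fromBlocks A B C D) = fromBlocks (cjc A) (cjc B) (cjc C) (cjc D) := by
  simp [cjc, Matrix.fromBlocks_map]

lemma cjc_det {a : Type*} [Fintype a] [DecidableEq a] (M : Matrix a a ℂ) :
    (cjc M).det = starRingEnd ℂ M.det := ((starRingEnd ℂ).map_det M).symm

lemma cjc_isUnit {a : Type*} [Fintype a] [DecidableEq a] {M : Matrix a a ℂ} (h : IsUnit M) :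
    IsUnit (cjc M) := by
  rw [Matrix.isUnit_iff_isUnit_det, cjc_det]
  exact ((Matrix.isUnit_iff_isUnit_det _).1 h).map (starRingEnd ℂ)

lemma cjc_inv {a : Type*} [Fintype a] [DecidableEq a] {M : Matrix a a ℂ} (h : IsUnit M) :
    cjc (M⁻¹) = (cjc M)⁻¹ := by
  symm
  apply Matrix.inv_eq_left_inv
  rw [← cjc_mul, Matrix.nonsing_inv_mul _ ((Matrix.isUnit_iff_isUnit_det _).1 h), cjc_one]

-- cjb versions
lemma cjb_cjb (t t' : Bool) {a b : Type*} (M : Matrix a b ℂ) :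
    cjb t (cjb t' M) = cjb (xor t t') M := by cases t <;> cases t' <;> simp [cjb]

lemma cjb_mul (t : Bool) {a b c : Type*} [Fintype b] (M : Matrix a b ℂ) (N : Matrix b c ℂ) :
    cjb t (M * N) = cjb t M * cjb t N := by cases t <;> simp [cjc_mul]

@[simp] lemma cjb_one (t : Bool) {a : Type*} [Fintype a] [DecidableEq a] :
    cjb t (1 : Matrix a a ℂ) = 1 := by cases t <;> simp

@[simp] lemma cjb_zero (t : Bool) {a b : Type*} : cjb t (0 : Matrix a b ℂ) = 0 := by
  cases t <;> simp

lemma cjb_sub (t : Bool) {a b : Type*} (M N : Matrix a b ℂ) :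
    cjb t (M - N) = cjb t M - cjb t N := by cases t <;> simp [cjc_sub]

lemma cjb_neg (t : Bool) {a b : Type*} (M : Matrix a b ℂ) : cjb t (-M) = -(cjb t M) := by
  cases t <;> simp [cjc_neg]

lemma cjb_transpose (t : Bool) {a b : Type*} (M : Matrix a b ℂ) :
    cjb t (Mᵀ) = (cjb t M)ᵀ := by cases t <;> simp [cjc_transpose]

lemma cjb_fromBlocks (t : Bool) {a b c d : Type*} (A : Matrix a c ℂ) (B : Matrix a d ℂ)
    (C : Matrix b c ℂ) (D : Matrix b d ℂ) :
    cjb t (fromBlocks A B C D) = fromBlocks (cjb t A) (cjb t B) (cjb t C) (cjb t D) := by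
  cases t <;> simp [cjc_fromBlocks]

lemma cjb_isUnit (t : Bool) {a : Type*} [Fintype a] [DecidableEq a] {M : Matrix a a ℂ}
    (h : IsUnit M) : IsUnit (cjb t M) := by cases t <;> simp [cjc_isUnit h, h]

lemma cjb_inv (t : Bool) {a : Type*} [Fintype a] [DecidableEq a] {M : Matrix a a ℂ}
    (h : IsUnit M) : cjb t (M⁻¹) = (cjb t M)⁻¹ := by cases t <;> simp [cjc_inv h]

/-- group law on the four operations -/
def bmul (σ τ : Bool × Bool) : Bool × Bool := (xor σ.1 τ.1, xor σ.2 τ.2)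

@[simp] lemma bmul_self_cancel (σ τ : Bool × Bool) : bmul σ (bmul σ τ) = τ := by
  rcases σ with ⟨a, b⟩; rcases τ with ⟨c, d⟩; simp [bmul]

lemma bmul_comm (σ τ : Bool × Bool) : bmul σ τ = bmul τ σ := by
  rcases σ with ⟨a, b⟩; rcases τ with ⟨c, d⟩; simp [bmul, Bool.xor_comm]

@[simp] lemma bmul_id (σ : Bool × Bool) : bmul (false, false) σ = σ := by
  rcases σ with ⟨a, b⟩; simp [bmul]

lemma fourOp_pair (a c : Bool) {k : Type*} (M : Matrix k k ℂ) :
    fourOp (a, c) M = if c then (cjb a M)ᵀ else cjb a M := rfl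

lemma fourOp_eq_cjb (a : Bool) {k : Type*} (M : Matrix k k ℂ) :
    fourOp (a, false) M = cjb a M := rfl

lemma fourOp_eq_cjbT (a : Bool) {k : Type*} (M : Matrix k k ℂ) :
    fourOp (a, true) M = (cjb a M)ᵀ := rfl

lemma fourOp_comp (σ τ : Bool × Bool) {k : Type*} (M : Matrix k k ℂ) :
    fourOp σ (fourOp τ M) = fourOp (bmul σ τ) M := by
  rcases σ with ⟨a, b⟩; rcases τ with ⟨c, d⟩
  cases b <;> cases d <;>
    simp [fourOp_pair, bmul, cjb_cjb, cjb_transpose, Bool.xor_comm]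

lemma fourOp_isUnit (σ : Bool × Bool) {k : Type*} [Fintype k] [DecidableEq k]
    {M : Matrix k k ℂ} (h : IsUnit M) : IsUnit (fourOp σ M) := by
  rcases σ with ⟨a, b⟩
  cases b <;>
    simp only [fourOp_pair, if_true, if_false, Bool.false_eq_true] <;>
    [skip; rw [Matrix.isUnit_iff_isUnit_det, Matrix.det_transpose,
        ← Matrix.isUnit_iff_isUnit_det]] <;>
    exact cjb_isUnit a h

-- J lemmas
lemma J_mul_neg_J (k : ℕ) : JmatC k * (-(JmatC k)) = 1 := by
  simp [JmatC, Matrix.fromBlocks_multiply, Matrix.fromBlocks_neg, ← Matrix.fromBlocks_one]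

lemma J_isUnit (k : ℕ) : IsUnit (JmatC k) := by
  rw [Matrix.isUnit_iff_isUnit_det]
  have h : (JmatC k).det * (-(JmatC k)).det = 1 := by
    rw [← Matrix.det_mul, J_mul_neg_J, Matrix.det_one]
  exact IsUnit.of_mul_eq_one _ h

lemma J_det_isUnit (k : ℕ) : IsUnit (JmatC k).det :=
  (Matrix.isUnit_iff_isUnit_det _).1 (J_isUnit k)

lemma J_inv (k : ℕ) : (JmatC k)⁻¹ = -(JmatC k) :=
  Matrix.inv_eq_right_inv (J_mul_neg_J k)

lemma J_transpose (k : ℕ) : (JmatC k)ᵀ = (JmatC k)⁻¹ := by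
  rw [J_inv]
  simp only [JmatC, Matrix.fromBlocks_transpose, Matrix.transpose_zero, Matrix.transpose_one,
    Matrix.transpose_neg, Matrix.fromBlocks_neg, neg_zero, neg_neg]

lemma cjc_J (k : ℕ) : cjc (JmatC k) = JmatC k := by
  simp only [JmatC, cjc_fromBlocks, cjc_zero, cjc_one, cjc_neg]

lemma cjb_J (t : Bool) (k : ℕ) : cjb t (JmatC k) = JmatC k := by cases t <;> simp [cjc_J]

lemma cjb_J_inv (t : Bool) (k : ℕ) : cjb t ((JmatC k)⁻¹) = (JmatC k)⁻¹ := by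
  rw [J_inv]; rw [cjb_neg, cjb_J]

lemma J_swap (k : ℕ) (X : Matrix (Fin k ⊕ Fin k) (Fin k ⊕ Fin k) ℂ) :
    (JmatC k)⁻¹ * X * JmatC k = JmatC k * X * (JmatC k)⁻¹ := by
  rw [J_inv]
  simp [Matrix.neg_mul, Matrix.mul_neg]

/-- the key sandwich computation -/
lemma J_sandwich {a b : ℕ} (p q : Matrix (Fin a) (Fin b) ℂ) (r s : Matrix (Fin a) (Fin b) ℂ) :
    (JmatC a)⁻¹ * fromBlocks p q r s * JmatC b = fromBlocks s (-r) (-q) p := by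
  rw [J_inv]
  simp [JmatC, Matrix.fromBlocks_multiply, Matrix.neg_mul, Matrix.mul_neg,
    Matrix.fromBlocks_neg]

-- angFour lemmas

lemma angFour_false (a : Bool) {k : ℕ} (P : Matrix (Fin k ⊕ Fin k) (Fin k ⊕ Fin k) ℂ) :
    angFour (a, false) P = cjb a P := rfl

lemma angFour_true (a : Bool) {k : ℕ} (P : Matrix (Fin k ⊕ Fin k) (Fin k ⊕ Fin k) ℂ) :
    angFour (a, true) P = JmatC k * ((cjb a P)ᵀ)⁻¹ * (JmatC k)⁻¹ := rfl

lemma angFour_isUnit (σ : Bool × Bool) {k : ℕ} {P : Matrix (Fin k ⊕ Fin k) (Fin k ⊕ Fin k) ℂ}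
    (h : IsUnit P) : IsUnit (angFour σ P) := by
  rcases σ with ⟨a, b⟩
  cases b
  · rw [angFour_false]; exact cjb_isUnit a h
  · rw [angFour_true]
    have h1 : IsUnit ((cjb a P)ᵀ) := by
      rw [Matrix.isUnit_iff_isUnit_det, Matrix.det_transpose, ← Matrix.isUnit_iff_isUnit_det]
      exact cjb_isUnit a h
    exact ((J_isUnit k).mul (Matrix.isUnit_nonsing_inv_iff.2 h1)).mul
      (Matrix.isUnit_nonsing_inv_iff.2 (J_isUnit k))

lemma isUnit_cjbT (a : Bool) {k : Type*} [Fintype k] [DecidableEq k]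
    {P : Matrix k k ℂ} (h : IsUnit P) : IsUnit ((cjb a P)ᵀ) := by
  rw [Matrix.isUnit_iff_isUnit_det, Matrix.det_transpose, ← Matrix.isUnit_iff_isUnit_det]
  exact cjb_isUnit a h

lemma cjb_angFour (b : Bool) (σ : Bool × Bool) {k : ℕ}
    {P : Matrix (Fin k ⊕ Fin k) (Fin k ⊕ Fin k) ℂ} (h : IsUnit P) :
    cjb b (angFour σ P) = angFour (xor b σ.1, σ.2) P := by
  rcases σ with ⟨a, c⟩
  cases c
  · rw [angFour_false, angFour_false, cjb_cjb]
  · show cjb b (angFour (a, true) P) = angFour (xor b a, true) P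
    rw [angFour_true, angFour_true, cjb_mul, cjb_mul, cjb_J, cjb_J_inv,
      cjb_inv b (isUnit_cjbT a h), cjb_transpose, cjb_cjb]

/-- key transformation lemma for transpose-type transformations -/
lemma J_angFour (b : Bool) (σ : Bool × Bool) {k : ℕ}
    {P : Matrix (Fin k ⊕ Fin k) (Fin k ⊕ Fin k) ℂ} (h : IsUnit P) :
    ((JmatC k)⁻¹ * (cjb b (angFour σ P))ᵀ * JmatC k)⁻¹ = angFour (xor b σ.1, !σ.2) P := by
  rcases σ with ⟨a, c⟩
  cases c
  · -- σ plain/conj : target is transpose type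
    show ((JmatC k)⁻¹ * (cjb b (angFour (a, false) P))ᵀ * JmatC k)⁻¹ = angFour (xor b a, true) P
    rw [angFour_false, cjb_cjb]
    rw [Matrix.mul_inv_rev, Matrix.mul_inv_rev,
      Matrix.nonsing_inv_nonsing_inv _ (J_det_isUnit k), ← Matrix.mul_assoc, J_swap,
      angFour_true]
  · -- σ transpose type : target is plain/conj
    show ((JmatC k)⁻¹ * (cjb b (angFour (a, true) P))ᵀ * JmatC k)⁻¹ = angFour (xor b a, false) P
    rw [angFour_true, cjb_mul, cjb_mul, cjb_J, cjb_J_inv,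
      cjb_inv b (isUnit_cjbT a h), cjb_transpose, cjb_cjb]
    have e1 : ((JmatC k * ((cjb (xor b a) P)ᵀ)⁻¹ * (JmatC k)⁻¹)ᵀ)
        = JmatC k * ((cjb (xor b a) P)⁻¹) * (JmatC k)⁻¹ := by
      rw [Matrix.transpose_mul, Matrix.transpose_mul, Matrix.transpose_nonsing_inv,
        Matrix.transpose_nonsing_inv, Matrix.transpose_transpose, J_transpose,
        Matrix.nonsing_inv_nonsing_inv _ (J_det_isUnit k), Matrix.mul_assoc]
    rw [e1]
    have e2 : (JmatC k)⁻¹ * (JmatC k * (cjb (xor b a) P)⁻¹ * (JmatC k)⁻¹) * JmatC k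
        = (cjb (xor b a) P)⁻¹ := by
      rw [← Matrix.mul_assoc, ← Matrix.mul_assoc,
        Matrix.nonsing_inv_mul _ (J_det_isUnit k), Matrix.one_mul, Matrix.mul_assoc,
        Matrix.nonsing_inv_mul _ (J_det_isUnit k), Matrix.mul_one]
    rw [e2, Matrix.nonsing_inv_nonsing_inv]
    · rfl
    · exact (Matrix.isUnit_iff_isUnit_det _).1 (cjb_isUnit _ h)

lemma cjb_angFour' (b : Bool) (σ : Bool × Bool) {k : ℕ}
    {P : Matrix (Fin k ⊕ Fin k) (Fin k ⊕ Fin k) ℂ} (h : IsUnit P) :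
    cjb b (angFour σ P) = angFour (bmul (b, false) σ) P := by
  rw [cjb_angFour b σ h]
  congr 1
  simp [bmul]

lemma J_angFour' (b : Bool) (σ : Bool × Bool) {k : ℕ}
    {P : Matrix (Fin k ⊕ Fin k) (Fin k ⊕ Fin k) ℂ} (h : IsUnit P) :
    ((JmatC k)⁻¹ * (cjb b (angFour σ P))ᵀ * JmatC k)⁻¹ = angFour (bmul (b, true) σ) P := by
  rw [J_angFour b σ h]
  congr 1
  simp [bmul]

/-- angFour of a block unitriangular matrix -/
lemma angFour_tri (σ : Bool × Bool) {k : ℕ} (X : Matrix (Fin k) (Fin k) ℂ) :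
    angFour σ (fromBlocks 1 X 0 1) = fromBlocks 1 (fourOp σ X) 0 1 := by
  rcases σ with ⟨a, c⟩
  cases c
  · rw [angFour_false, fourOp_eq_cjb, cjb_fromBlocks, cjb_one, cjb_zero]
  · rw [angFour_true, fourOp_eq_cjbT, cjb_fromBlocks, cjb_one, cjb_zero]
    have h1 : (fromBlocks 1 (cjb a X) 0 1 : Matrix (Fin k ⊕ Fin k) (Fin k ⊕ Fin k) ℂ)ᵀ
        = fromBlocks 1 0 ((cjb a X)ᵀ) 1 := by
      rw [Matrix.fromBlocks_transpose]; simp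
    rw [h1]
    have h2 : (fromBlocks 1 0 ((cjb a X)ᵀ) 1 : Matrix (Fin k ⊕ Fin k) (Fin k ⊕ Fin k) ℂ)⁻¹
        = fromBlocks 1 0 (-(cjb a X)ᵀ) 1 := by
      apply Matrix.inv_eq_right_inv
      rw [Matrix.fromBlocks_multiply]
      simp [← Matrix.fromBlocks_one]
    rw [h2, J_inv]
    rw [show (JmatC k * fromBlocks 1 0 (-(cjb a X)ᵀ) 1 * -JmatC k)
      = -(JmatC k * fromBlocks 1 0 (-(cjb a X)ᵀ) 1 * JmatC k) by
        rw [Matrix.mul_neg]]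
    rw [JmatC, Matrix.fromBlocks_multiply, Matrix.fromBlocks_multiply]
    simp [Matrix.fromBlocks_neg]

lemma isUnit_tri {k : ℕ} (X : Matrix (Fin k) (Fin k) ℂ) :
    IsUnit (fromBlocks 1 X 0 1 : Matrix (Fin k ⊕ Fin k) (Fin k ⊕ Fin k) ℂ) := by
  rw [Matrix.isUnit_iff_isUnit_det, Matrix.det_fromBlocks_zero₂₁]
  simp




section Plain

variable {ι κ : Type} [Fintype ι] [Fintype κ]
variable (m : κ → ℕ) (p q : ι → κ)
variable (Bb : ∀ i, Matrix (Fin (m (q i))) (Fin (m (p i))) ℂ)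

/-- solution space of the intertwining system: morphisms from the `Bb`-representation
to the representation `W` on the spaces `V`. -/
def homS (V : κ → Type) [∀ k, Fintype (V k)]
    (W : ∀ i, Matrix (V (q i)) (V (p i)) ℂ) :
    Submodule ℂ (∀ k, Matrix (V k) (Fin (m k)) ℂ) where
  carrier := {h | ∀ i, W i * h (p i) = h (q i) * Bb i}
  add_mem' := by
    intro x y hx hy i
    simp only [Pi.add_apply, Matrix.mul_add, Matrix.add_mul, hx i, hy i]
  zero_mem' := by intro i; simp
  smul_mem' := by
    intro c x hx i
    simp only [Pi.smul_apply, Matrix.mul_smul, Matrix.smul_mul, hx i]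

lemma mem_homS {V : κ → Type} [∀ k, Fintype (V k)]
    {W : ∀ i, Matrix (V (q i)) (V (p i)) ℂ} {h : ∀ k, Matrix (V k) (Fin (m k)) ℂ} :
    h ∈ homS m p q Bb V W ↔ ∀ i, W i * h (p i) = h (q i) * Bb i := Iff.rfl

-- toRows helper lemmas
lemma toRows₁_mul {a b c d : Type} [Fintype c] (M : Matrix (a ⊕ b) c ℂ) (R : Matrix c d ℂ) :
    toRows₁ (M * R) = toRows₁ M * R := by
  conv_lhs => rw [← Matrix.fromRows_toRows M, Matrix.fromRows_mul, Matrix.toRows₁_fromRows]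

lemma toRows₂_mul {a b c d : Type} [Fintype c] (M : Matrix (a ⊕ b) c ℂ) (R : Matrix c d ℂ) :
    toRows₂ (M * R) = toRows₂ M * R := by
  conv_lhs => rw [← Matrix.fromRows_toRows M, Matrix.fromRows_mul, Matrix.toRows₂_fromRows]

lemma toRows₁_fromBlocks_mul {a b c d e : Type} [Fintype c] [Fintype d]
    (A : Matrix a c ℂ) (B : Matrix a d ℂ) (C : Matrix b c ℂ) (D : Matrix b d ℂ)
    (M : Matrix (c ⊕ d) e ℂ) :
    toRows₁ (fromBlocks A B C D * M) = A * toRows₁ M + B * toRows₂ M := by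
  conv_lhs => rw [← Matrix.fromRows_toRows M, Matrix.fromBlocks_mul_fromRows,
    Matrix.toRows₁_fromRows]

lemma toRows₂_fromBlocks_mul {a b c d e : Type} [Fintype c] [Fintype d]
    (A : Matrix a c ℂ) (B : Matrix a d ℂ) (C : Matrix b c ℂ) (D : Matrix b d ℂ)
    (M : Matrix (c ⊕ d) e ℂ) :
    toRows₂ (fromBlocks A B C D * M) = C * toRows₁ M + D * toRows₂ M := by
  conv_lhs => rw [← Matrix.fromRows_toRows M, Matrix.fromBlocks_mul_fromRows,
    Matrix.toRows₂_fromRows]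

@[simp] lemma toRows₁_add {a b c : Type} (M N : Matrix (a ⊕ b) c ℂ) :
    toRows₁ (M + N) = toRows₁ M + toRows₁ N := rfl

@[simp] lemma toRows₂_add {a b c : Type} (M N : Matrix (a ⊕ b) c ℂ) :
    toRows₂ (M + N) = toRows₂ M + toRows₂ N := rfl

@[simp] lemma toRows₁_smul {a b c : Type} (r : ℂ) (M : Matrix (a ⊕ b) c ℂ) :
    toRows₁ (r • M) = r • toRows₁ M := rfl

@[simp] lemma toRows₂_smul {a b c : Type} (r : ℂ) (M : Matrix (a ⊕ b) c ℂ) :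
    toRows₂ (r • M) = r • toRows₂ M := rfl

set_option maxHeartbeats 1000000 in
theorem plain_roth
    (Aa Cc : ∀ i, Matrix (Fin (m (q i))) (Fin (m (p i))) ℂ)
    (Q : ∀ k, Matrix (Fin (m k) ⊕ Fin (m k)) (Fin (m k) ⊕ Fin (m k)) ℂ)
    (hQ : ∀ k, IsUnit (Q k))
    (hc : ∀ i, fromBlocks (Aa i) 0 0 (Bb i) * Q (p i)
        = Q (q i) * fromBlocks (Aa i) (Cc i) 0 (Bb i)) :
    ∃ X : ∀ k, Matrix (Fin (m k)) (Fin (m k)) ℂ,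
      ∀ i, Aa i * X (p i) - X (q i) * Bb i = Cc i := by
  classical
  have hQd : ∀ k, IsUnit (Q k).det := fun k => (Matrix.isUnit_iff_isUnit_det _).1 (hQ k)
  set H1 := homS m p q Bb (fun k => Fin (m k) ⊕ Fin (m k))
    (fun i => fromBlocks (Aa i) (Cc i) 0 (Bb i)) with hH1
  set H0 := homS m p q Bb (fun k => Fin (m k) ⊕ Fin (m k))
    (fun i => fromBlocks (Aa i) 0 0 (Bb i)) with hH0
  set HBB := homS m p q Bb (fun k => Fin (m k)) Bb with hHBB
  set HBA := homS m p q Bb (fun k => Fin (m k)) Aa with hHBA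
  -- the equivalence `H1 ≃ H0` given by left multiplication by `Q`
  have hmemF : ∀ h : H1, (fun k => Q k * h.1 k) ∈ H0 := by
    intro h i
    rw [← Matrix.mul_assoc, hc i, Matrix.mul_assoc, h.2 i, ← Matrix.mul_assoc]
  let F : H1 →ₗ[ℂ] H0 :=
    { toFun := fun h => ⟨fun k => Q k * h.1 k, hmemF h⟩
      map_add' := by
        intro x y; apply Subtype.ext; funext k
        simp [Matrix.mul_add]
      map_smul' := by
        intro c x; apply Subtype.ext; funext k
        simp [Matrix.mul_smul] }
  have hNQ : ∀ i, fromBlocks (Aa i) (Cc i) 0 (Bb i) * (Q (p i))⁻¹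
      = (Q (q i))⁻¹ * fromBlocks (Aa i) 0 0 (Bb i) := by
    intro i
    have h2 := congrArg (fun Z => (Q (q i))⁻¹ * Z * (Q (p i))⁻¹) (hc i)
    simp only [Matrix.mul_assoc] at h2
    rw [Matrix.mul_nonsing_inv _ (hQd (p i)), Matrix.mul_one] at h2
    rw [← Matrix.mul_assoc, Matrix.nonsing_inv_mul _ (hQd (q i)), Matrix.one_mul] at h2
    exact h2.symm
  have hmemG : ∀ h : H0, (fun k => (Q k)⁻¹ * h.1 k) ∈ H1 := by
    intro h i
    rw [← Matrix.mul_assoc, hNQ i, Matrix.mul_assoc, h.2 i, ← Matrix.mul_assoc]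
  let G : H0 →ₗ[ℂ] H1 :=
    { toFun := fun h => ⟨fun k => (Q k)⁻¹ * h.1 k, hmemG h⟩
      map_add' := by
        intro x y; apply Subtype.ext; funext k
        simp [Matrix.mul_add]
      map_smul' := by
        intro c x; apply Subtype.ext; funext k
        simp [Matrix.mul_smul] }
  have hFinj : Function.Injective F := by
    intro x y hxy
    apply Subtype.ext; funext k
    have h1 : Q k * x.1 k = Q k * y.1 k := congrFun (congrArg Subtype.val hxy) k
    have h2 := congrArg (fun z => (Q k)⁻¹ * z) h1
    simpa only [← Matrix.mul_assoc, Matrix.nonsing_inv_mul _ (hQd k), Matrix.one_mul] using h2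
  have hGinj : Function.Injective G := by
    intro x y hxy
    apply Subtype.ext; funext k
    have h1 : (Q k)⁻¹ * x.1 k = (Q k)⁻¹ * y.1 k := congrFun (congrArg Subtype.val hxy) k
    have h2 := congrArg (fun z => Q k * z) h1
    simpa only [← Matrix.mul_assoc, Matrix.mul_nonsing_inv _ (hQd k), Matrix.one_mul] using h2
  have hr10 : Module.finrank ℂ H1 = Module.finrank ℂ H0 :=
    le_antisymm (LinearMap.finrank_le_finrank_of_injective hFinj)
      (LinearMap.finrank_le_finrank_of_injective hGinj)
  -- split H0 into HBA × HBB
  let u : H0 →ₗ[ℂ] HBA × HBB :=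
    { toFun := fun h =>
        (⟨fun k => toRows₁ (h.1 k), by
          intro i
          have h3 := congrArg toRows₁ (h.2 i)
          rwa [toRows₁_fromBlocks_mul, Matrix.zero_mul, add_zero, toRows₁_mul] at h3⟩,
         ⟨fun k => toRows₂ (h.1 k), by
          intro i
          have h3 := congrArg toRows₂ (h.2 i)
          rwa [toRows₂_fromBlocks_mul, Matrix.zero_mul, zero_add, toRows₂_mul] at h3⟩)
      map_add' := by
        intro x y
        refine Prod.ext (Subtype.ext (funext fun k => ?_)) (Subtype.ext (funext fun k => ?_)) <;>
          simp
      map_smul' := by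
        intro c x
        refine Prod.ext (Subtype.ext (funext fun k => ?_)) (Subtype.ext (funext fun k => ?_)) <;>
          simp }
  have huinj : Function.Injective u := by
    intro x y hxy
    have h1 : ∀ k, toRows₁ (x.1 k) = toRows₁ (y.1 k) :=
      fun k => congrFun (congrArg Subtype.val (congrArg Prod.fst hxy)) k
    have h2 : ∀ k, toRows₂ (x.1 k) = toRows₂ (y.1 k) :=
      fun k => congrFun (congrArg Subtype.val (congrArg Prod.snd hxy)) k
    apply Subtype.ext; funext k
    rw [← Matrix.fromRows_toRows (x.1 k), ← Matrix.fromRows_toRows (y.1 k), h1 k, h2 k]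
  let v : HBA × HBB →ₗ[ℂ] H0 :=
    { toFun := fun z => ⟨fun k => fromRows (z.1.1 k) (z.2.1 k), by
        intro i
        rw [Matrix.fromBlocks_mul_fromRows, Matrix.fromRows_mul, z.1.2 i, z.2.2 i,
          Matrix.zero_mul, Matrix.zero_mul, add_zero, zero_add]⟩
      map_add' := by
        intro x y; apply Subtype.ext; funext k
        ext (i | i) j <;> rfl
      map_smul' := by
        intro c x; apply Subtype.ext; funext k
        ext (i | i) j <;> rfl }
  have hvinj : Function.Injective v := by
    intro x y hxy
    have h1 := congrFun (congrArg Subtype.val hxy)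
    have h2 : ∀ k, (Matrix.fromRows (x.1.1 k) (x.2.1 k)) = Matrix.fromRows (y.1.1 k) (y.2.1 k) :=
      fun k => h1 k
    refine Prod.ext (Subtype.ext (funext fun k => ?_)) (Subtype.ext (funext fun k => ?_))
    · exact (Matrix.fromRows_inj.eq_iff.1 (h2 k)).1
    · exact (Matrix.fromRows_inj.eq_iff.1 (h2 k)).2
  have hsplit : Module.finrank ℂ H0 = Module.finrank ℂ HBA + Module.finrank ℂ HBB := by
    have hp := Module.finrank_prod (R := ℂ) (M := HBA) (M' := HBB)
    refine le_antisymm ?_ ?_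
    · rw [← hp]; exact LinearMap.finrank_le_finrank_of_injective huinj
    · rw [← hp]; exact LinearMap.finrank_le_finrank_of_injective hvinj
  -- the projection to the bottom rows
  let β : H1 →ₗ[ℂ] HBB :=
    { toFun := fun h => ⟨fun k => toRows₂ (h.1 k), by
        intro i
        have h3 := congrArg toRows₂ (h.2 i)
        rwa [toRows₂_fromBlocks_mul, Matrix.zero_mul, zero_add, toRows₂_mul] at h3⟩
      map_add' := by intro x y; apply Subtype.ext; funext k; simp
      map_smul' := by intro c x; apply Subtype.ext; funext k; simp }
  -- the kernel of β embeds into HBA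
  let w : LinearMap.ker β →ₗ[ℂ] HBA :=
    { toFun := fun x => ⟨fun k => toRows₁ (x.1.1 k), by
        intro i
        have hz : ∀ k, toRows₂ (x.1.1 k) = 0 :=
          fun k => congrFun (congrArg Subtype.val x.2) k
        have h3 := congrArg toRows₁ (x.1.2 i)
        rwa [toRows₁_fromBlocks_mul, toRows₁_mul, hz (p i), Matrix.mul_zero, add_zero] at h3⟩
      map_add' := by intro x y; apply Subtype.ext; funext k; simp
      map_smul' := by intro c x; apply Subtype.ext; funext k; simp }
  have hwinj : Function.Injective w := by
    intro x y hxy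
    have h1 : ∀ k, toRows₁ (x.1.1 k) = toRows₁ (y.1.1 k) :=
      fun k => congrFun (congrArg Subtype.val hxy) k
    have hzx : ∀ k, toRows₂ (x.1.1 k) = 0 := fun k => congrFun (congrArg Subtype.val x.2) k
    have hzy : ∀ k, toRows₂ (y.1.1 k) = 0 := fun k => congrFun (congrArg Subtype.val y.2) k
    apply Subtype.ext; apply Subtype.ext; funext k
    rw [← Matrix.fromRows_toRows (x.1.1 k), ← Matrix.fromRows_toRows (y.1.1 k),
      h1 k, hzx k, hzy k]
  have hrn := LinearMap.finrank_range_add_finrank_ker β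
  have hker_le : Module.finrank ℂ (LinearMap.ker β) ≤ Module.finrank ℂ HBA :=
    LinearMap.finrank_le_finrank_of_injective hwinj
  have hrange_le : Module.finrank ℂ (LinearMap.range β) ≤ Module.finrank ℂ HBB :=
    Submodule.finrank_le _
  have hrange_eq : Module.finrank ℂ (LinearMap.range β) = Module.finrank ℂ HBB := by
    rw [hr10, hsplit] at hrn
    omega
  have htop : LinearMap.range β = ⊤ := Submodule.eq_top_of_finrank_eq hrange_eq
  have hone : (fun k => (1 : Matrix (Fin (m k)) (Fin (m k)) ℂ)) ∈ HBB := by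
    intro i; rw [Matrix.mul_one, Matrix.one_mul]
  obtain ⟨h, hh⟩ := LinearMap.range_eq_top.1 htop ⟨_, hone⟩
  have h4 : ∀ k, toRows₂ (h.1 k) = (1 : Matrix (Fin (m k)) (Fin (m k)) ℂ) :=
    fun k => congrFun (congrArg Subtype.val hh) k
  refine ⟨fun k => -(toRows₁ (h.1 k)), fun i => ?_⟩
  have h3 := congrArg toRows₁ (h.2 i)
  rw [toRows₁_fromBlocks_mul, toRows₁_mul, h4 (p i), Matrix.mul_one] at h3
  have h5 : Cc i = toRows₁ (h.1 (q i)) * Bb i - Aa i * toRows₁ (h.1 (p i)) := by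
    rw [← h3]; abel
  rw [h5, Matrix.mul_neg, Matrix.neg_mul]
  abel

end Plain

-- extra fourOp lemmas
lemma fourOp_sum {k : Type*} [Fintype k] (σ : Bool × Bool)
    (F : Bool × Bool → Matrix k k ℂ) :
    fourOp σ (∑ τ : Bool × Bool, F τ) = ∑ τ : Bool × Bool, fourOp σ (F τ) := by
  rcases σ with ⟨a, c⟩
  cases a <;> cases c <;> ext i j <;>
    simp [fourOp, Matrix.sum_apply, map_sum]

lemma fourOp_smul_inv4 {k : Type*} (σ : Bool × Bool) (M : Matrix k k ℂ) :
    fourOp σ ((4 : ℂ)⁻¹ • M) = (4 : ℂ)⁻¹ • fourOp σ M := by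
  rcases σ with ⟨a, c⟩
  cases a <;> cases c <;> ext i j <;>
    simp [fourOp, _root_.map_mul, map_inv₀, Complex.conj_ofNat]

section Corollary

variable {s t : ℕ} (n : Fin t → ℕ) (f g : Fin s → Fin t) (ε δ : Fin s → Bool × Bool)
variable (A B C : ∀ i : Fin s, Matrix (Fin (n (g i))) (Fin (n (f i))) ℂ)

/-- left-hand node of the doubled plain system -/
def pD : Fin s × Bool × Bool → Fin t × Bool × Bool
  | (i, b, false) => (f i, bmul (b, false) (ε i))
  | (i, b, true)  => (g i, bmul (b, true) (δ i))

/-- right-hand node of the doubled plain system -/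
def qD : Fin s × Bool × Bool → Fin t × Bool × Bool
  | (i, b, false) => (g i, bmul (b, false) (δ i))
  | (i, b, true)  => (f i, bmul (b, true) (ε i))

/-- left coefficients of the doubled plain system -/
def AD : ∀ x : Fin s × Bool × Bool,
    Matrix (Fin (n (qD f g ε δ x).1)) (Fin (n (pD f g ε δ x).1)) ℂ
  | (i, b, false) => cjb b (A i)
  | (i, b, true)  => (cjb b (B i))ᵀ

/-- right coefficients of the doubled plain system -/
def BD : ∀ x : Fin s × Bool × Bool,
    Matrix (Fin (n (qD f g ε δ x).1)) (Fin (n (pD f g ε δ x).1)) ℂ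
  | (i, b, false) => cjb b (B i)
  | (i, b, true)  => (cjb b (A i))ᵀ

/-- constant terms of the doubled plain system -/
def CD : ∀ x : Fin s × Bool × Bool,
    Matrix (Fin (n (qD f g ε δ x).1)) (Fin (n (pD f g ε δ x).1)) ℂ
  | (i, b, false) => cjb b (C i)
  | (i, b, true)  => -((cjb b (C i))ᵀ)

set_option maxHeartbeats 1000000 in
/-- an invertible solution of the mixed block system yields one for the doubled plain system -/
lemma transfer_Q (P : ∀ j, Matrix (Fin (n j) ⊕ Fin (n j)) (Fin (n j) ⊕ Fin (n j)) ℂ)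
    (hP : ∀ j, IsUnit (P j))
    (hc : ∀ i, fromBlocks (A i) 0 0 (B i) * angFour (ε i) (P (f i))
        = angFour (δ i) (P (g i)) * fromBlocks (A i) (C i) 0 (B i)) :
    ∀ x, fromBlocks (AD n f g ε δ A B x) 0 0 (BD n f g ε δ A B x)
          * angFour (pD f g ε δ x).2 (P (pD f g ε δ x).1)
        = angFour (qD f g ε δ x).2 (P (qD f g ε δ x).1)
          * fromBlocks (AD n f g ε δ A B x) (CD n f g ε δ C x) 0 (BD n f g ε δ A B x) := by
  rintro ⟨i, b, tb⟩
  cases tb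
  · -- conjugation-type transformation
    show fromBlocks (cjb b (A i)) 0 0 (cjb b (B i))
          * angFour (bmul (b, false) (ε i)) (P (f i))
        = angFour (bmul (b, false) (δ i)) (P (g i))
          * fromBlocks (cjb b (A i)) (cjb b (C i)) 0 (cjb b (B i))
    have h1 := congrArg (cjb b) (hc i)
    rw [cjb_mul, cjb_mul, cjb_fromBlocks, cjb_fromBlocks, cjb_zero,
      cjb_angFour' b _ (hP (f i)), cjb_angFour' b _ (hP (g i))] at h1
    exact h1
  · -- transpose-type transformation
    show fromBlocks ((cjb b (B i))ᵀ) 0 0 ((cjb b (A i))ᵀ)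
          * angFour (bmul (b, true) (δ i)) (P (g i))
        = angFour (bmul (b, true) (ε i)) (P (f i))
          * fromBlocks ((cjb b (B i))ᵀ) (-((cjb b (C i))ᵀ)) 0 ((cjb b (A i))ᵀ)
    set Φ := angFour (ε i) (P (f i)) with hΦdef
    set Ψ := angFour (δ i) (P (g i)) with hΨdef
    have hΦ : IsUnit Φ := angFour_isUnit _ (hP (f i))
    have hΨ : IsUnit Ψ := angFour_isUnit _ (hP (g i))
    set Jf := JmatC (n (f i)) with hJf
    set Jg := JmatC (n (g i)) with hJg
    set Φ' := Jf⁻¹ * (cjb b Φ)ᵀ * Jf with hΦ'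
    set Ψ' := Jg⁻¹ * (cjb b Ψ)ᵀ * Jg with hΨ'
    have hΦ'd : IsUnit Φ'.det := by
      apply (Matrix.isUnit_iff_isUnit_det _).1
      exact ((Matrix.isUnit_nonsing_inv_iff.2 (J_isUnit _)).mul (isUnit_cjbT b hΦ)).mul
        (J_isUnit _)
    have hΨ'd : IsUnit Ψ'.det := by
      apply (Matrix.isUnit_iff_isUnit_det _).1
      exact ((Matrix.isUnit_nonsing_inv_iff.2 (J_isUnit _)).mul (isUnit_cjbT b hΨ)).mul
        (J_isUnit _)
    have h1 := congrArg (cjb b) (hc i)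
    rw [cjb_mul, cjb_mul] at h1
    have h2 := congrArg Matrix.transpose h1
    rw [Matrix.transpose_mul, Matrix.transpose_mul] at h2
    -- h2 : (cjb b Φ)ᵀ * (cjb b M)ᵀ = (cjb b N)ᵀ * (cjb b Ψ)ᵀ
    have h4 : Φ' * (Jf⁻¹ * (cjb b (fromBlocks (A i) 0 0 (B i)))ᵀ * Jg)
        = (Jf⁻¹ * (cjb b (fromBlocks (A i) (C i) 0 (B i)))ᵀ * Jg) * Ψ' := by
      rw [hΦ', hΨ']
      simp only [Matrix.mul_assoc]
      rw [Matrix.mul_nonsing_inv_cancel_left _ _ (J_det_isUnit (n (f i))),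
        Matrix.mul_nonsing_inv_cancel_left _ _ (J_det_isUnit (n (g i)))]
      simp only [← Matrix.mul_assoc]
      rw [Matrix.mul_assoc (Jf⁻¹), h2]
      simp only [Matrix.mul_assoc]
      rfl
    have hM' : Jf⁻¹ * (cjb b (fromBlocks (A i) 0 0 (B i)))ᵀ * Jg
        = fromBlocks ((cjb b (B i))ᵀ) 0 0 ((cjb b (A i))ᵀ) := by
      rw [cjb_fromBlocks, cjb_zero, Matrix.fromBlocks_transpose, Matrix.transpose_zero,
        hJf, hJg, J_sandwich]
      simp
    have hN' : Jf⁻¹ * (cjb b (fromBlocks (A i) (C i) 0 (B i)))ᵀ * Jg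
        = fromBlocks ((cjb b (B i))ᵀ) (-((cjb b (C i))ᵀ)) 0 ((cjb b (A i))ᵀ) := by
      rw [cjb_fromBlocks, cjb_zero, Matrix.fromBlocks_transpose, Matrix.transpose_zero,
        hJf, hJg, J_sandwich]
      simp
    rw [hM', hN'] at h4
    -- now invert
    have h5 : fromBlocks ((cjb b (B i))ᵀ) 0 0 ((cjb b (A i))ᵀ) * Ψ'⁻¹
        = Φ'⁻¹ * fromBlocks ((cjb b (B i))ᵀ) (-((cjb b (C i))ᵀ)) 0 ((cjb b (A i))ᵀ) := by
      have h6 := congrArg (fun Z => Φ'⁻¹ * Z * Ψ'⁻¹) h4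
      rw [← Matrix.mul_assoc, Matrix.nonsing_inv_mul _ hΦ'd, Matrix.one_mul,
        Matrix.mul_assoc Φ'⁻¹, Matrix.mul_assoc _ Ψ' _, Matrix.mul_nonsing_inv _ hΨ'd,
        Matrix.mul_one] at h6
      exact h6
    have eΨ : Ψ'⁻¹ = angFour (bmul (b, true) (δ i)) (P (g i)) := by
      rw [hΨ', hJg, hΨdef]; exact J_angFour' b _ (hP (g i))
    have eΦ : Φ'⁻¹ = angFour (bmul (b, true) (ε i)) (P (f i)) := by
      rw [hΦ', hJf, hΦdef]; exact J_angFour' b _ (hP (f i))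
    rw [← eΨ, ← eΦ]
    exact h5

set_option maxHeartbeats 1000000 in
/-- a solution of the doubled plain system yields a solution of the mixed system -/
lemma transfer_sol (U : ∀ x : Fin t × Bool × Bool, Matrix (Fin (n x.1)) (Fin (n x.1)) ℂ)
    (hU : ∀ x, AD n f g ε δ A B x * U (pD f g ε δ x) - U (qD f g ε δ x) * BD n f g ε δ A B x
        = CD n f g ε δ C x) :
    ∃ X : ∀ j : Fin t, Matrix (Fin (n j)) (Fin (n j)) ℂ,
      ∀ i, A i * fourOp (ε i) (X (f i)) - fourOp (δ i) (X (g i)) * B i = C i := by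
  let V : ∀ (j : Fin t) (τ : Bool × Bool), Matrix (Fin (n j)) (Fin (n j)) ℂ :=
    fun j τ => U (j, τ)
  refine ⟨fun j => (4 : ℂ)⁻¹ • ∑ τ : Bool × Bool, fourOp τ (V j τ), fun i => ?_⟩
  have key : ∀ τ : Bool × Bool,
      A i * fourOp τ (V (f i) (bmul τ (ε i))) - fourOp τ (V (g i) (bmul τ (δ i))) * B i
        = C i := by
    rintro ⟨b, tb⟩
    cases tb
    · have h : cjb b (A i) * V (f i) (bmul (b, false) (ε i))
          - V (g i) (bmul (b, false) (δ i)) * cjb b (B i) = cjb b (C i) := hU (i, b, false)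
      cases b
      · simpa [fourOp_eq_cjb] using h
      · have h2 := congrArg cjc h
        rw [cjc_sub, cjc_mul, cjc_mul] at h2
        simp only [cjb_true, cjc_cjc] at h2
        simpa [fourOp_eq_cjb] using h2
    · have h : (cjb b (B i))ᵀ * V (g i) (bmul (b, true) (δ i))
          - V (f i) (bmul (b, true) (ε i)) * (cjb b (A i))ᵀ
          = -((cjb b (C i))ᵀ) := hU (i, b, true)
      have h2 := congrArg Matrix.transpose h
      rw [Matrix.transpose_sub, Matrix.transpose_mul, Matrix.transpose_mul,
        Matrix.transpose_neg, Matrix.transpose_transpose, Matrix.transpose_transpose,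
        Matrix.transpose_transpose] at h2
      -- h2 : V(g)ᵀ * cjb b (B i) - cjb b (A i) * V(f)ᵀ = -(cjb b (C i))
      have h3 := congrArg (cjb b) h2
      rw [cjb_sub, cjb_mul, cjb_mul, cjb_neg, cjb_cjb, cjb_cjb, cjb_cjb] at h3
      simp only [Bool.xor_self, cjb_false] at h3
      rw [cjb_transpose, cjb_transpose] at h3
      -- h3 : (cjb b V(g))ᵀ * B i - A i * (cjb b V(f))ᵀ = -(C i)
      rw [fourOp_eq_cjbT, fourOp_eq_cjbT]
      rw [show A i * (cjb b (V (f i) (bmul (b, true) (ε i))))ᵀ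
            - (cjb b (V (g i) (bmul (b, true) (δ i))))ᵀ * B i
          = -((cjb b (V (g i) (bmul (b, true) (δ i))))ᵀ * B i
            - A i * (cjb b (V (f i) (bmul (b, true) (ε i))))ᵀ) from (neg_sub _ _).symm]
      rw [h3, neg_neg]
  have e1 : fourOp (ε i) ((4 : ℂ)⁻¹ • ∑ τ : Bool × Bool, fourOp τ (V (f i) τ))
      = (4 : ℂ)⁻¹ • ∑ τ : Bool × Bool, fourOp τ (V (f i) (bmul τ (ε i))) := by
    rw [fourOp_smul_inv4, fourOp_sum]
    congr 1
    refine Fintype.sum_equiv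
      ⟨fun τ => bmul (ε i) τ, fun τ => bmul (ε i) τ, fun τ => by simp, fun τ => by simp⟩
      _ _ (fun τ => ?_)
    simp only [Equiv.coe_fn_mk]
    rw [fourOp_comp]
    congr 2
    rw [bmul_comm (bmul (ε i) τ) (ε i), bmul_self_cancel]
  have e2 : fourOp (δ i) ((4 : ℂ)⁻¹ • ∑ τ : Bool × Bool, fourOp τ (V (g i) τ))
      = (4 : ℂ)⁻¹ • ∑ τ : Bool × Bool, fourOp τ (V (g i) (bmul τ (δ i))) := by
    rw [fourOp_smul_inv4, fourOp_sum]
    congr 1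
    refine Fintype.sum_equiv
      ⟨fun τ => bmul (δ i) τ, fun τ => bmul (δ i) τ, fun τ => by simp, fun τ => by simp⟩
      _ _ (fun τ => ?_)
    simp only [Equiv.coe_fn_mk]
    rw [fourOp_comp]
    congr 2
    rw [bmul_comm (bmul (δ i) τ) (δ i), bmul_self_cancel]
  rw [e1, e2, Matrix.mul_smul, Matrix.smul_mul, ← smul_sub, Matrix.mul_sum, Matrix.sum_mul,
    ← Finset.sum_sub_distrib]
  rw [Finset.sum_congr rfl (fun τ _ => key τ), Finset.sum_const]
  rw [show (Finset.univ : Finset (Bool × Bool)).card = 4 by simp]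
  rw [show ((4 : ℕ) • C i) = ((4 : ℕ) : ℂ) • C i from (Nat.cast_smul_eq_nsmul ℂ 4 (C i)).symm,
    smul_smul]
  norm_num

end Corollary

end

end RothAux


/-- Corollary (b) of the paper: over `ℂ`, the system
`A_i X_{f i}^{ε_i} - X_{g i}^{δ_i} B_i = C_i` with
`ε_i, δ_i ∈ {id, conj, ⊤, *}` is solvable iff there exist invertible `P_1,…,P_t` with
`[[A_i,0],[0,B_i]] P_{f i}^{⟪ε_i⟫} = P_{g i}^{⟪δ_i⟫} [[A_i,C_i],[0,B_i]]`. -/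
theorem roth_system_complex {s t : ℕ}
    (n : Fin t → ℕ) (f g : Fin s → Fin t) (ε δ : Fin s → Bool × Bool)
    (A B C : ∀ i : Fin s, Matrix (Fin (n (g i))) (Fin (n (f i))) ℂ) :
    (∃ X : ∀ j : Fin t, Matrix (Fin (n j)) (Fin (n j)) ℂ,
        ∀ i, A i * fourOp (ε i) (X (f i)) - fourOp (δ i) (X (g i)) * B i = C i) ↔
      ∃ P : ∀ j : Fin t,
          Matrix (Fin (n j) ⊕ Fin (n j)) (Fin (n j) ⊕ Fin (n j)) ℂ,
        (∀ j, IsUnit (P j)) ∧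
        ∀ i, fromBlocks (A i) 0 0 (B i) * angFour (ε i) (P (f i))
              = angFour (δ i) (P (g i)) * fromBlocks (A i) (C i) 0 (B i) := by
  constructor
  · rintro ⟨X, hX⟩
    refine ⟨fun j => fromBlocks 1 (X j) 0 1, fun j => RothAux.isUnit_tri _, fun i => ?_⟩
    rw [RothAux.angFour_tri, RothAux.angFour_tri, Matrix.fromBlocks_multiply,
      Matrix.fromBlocks_multiply]
    simp only [Matrix.mul_one, Matrix.one_mul, Matrix.mul_zero, Matrix.zero_mul,
      add_zero, zero_add]
    rw [sub_eq_iff_eq_add.1 (hX i)]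
  · rintro ⟨P, hP, hc⟩
    have hQ := RothAux.transfer_Q n f g ε δ A B C P hP hc
    obtain ⟨U, hU⟩ := RothAux.plain_roth (fun x : Fin t × Bool × Bool => n x.1)
      (RothAux.pD f g ε δ) (RothAux.qD f g ε δ) (RothAux.BD n f g ε δ A B)
      (RothAux.AD n f g ε δ A B) (RothAux.CD n f g ε δ C)
      (fun x => angFour x.2 (P x.1)) (fun x => RothAux.angFour_isUnit _ (hP _)) hQ
    exact RothAux.transfer_sol n f g ε δ A B C U hU
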